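/- Let z^0 ∈ ℝ^n and define the DANA-D iteration z^{k+1} = z^k − α A_q(z^k) ∇g(z^k), where g(z) = Σ_{i=1}^n f_i(x^0_i + L_i z), H(x) = diag(f_i''(x_i)), and A_q(z) = Σ_{p=0}^q (I_n − L H(x^0 + Lz) L)^p. Assume there exists ε ∈ [0,1) such that for every x ∈ ℝ^n and every v ∈ ℝ^n with 1_n^⊤ v = 0, |v^⊤ (I_n − L H(x) L) v| ≤ ε ‖v‖². Then for any q ∈ ℕ and any step size 0 < α < 2(1−ε)/((n−1)(1+ε)(1−ε^{q+1})), the sequence (z^k) converges to the unique minimizer z* of g satisfying 1_n^⊤ z* = 1_n^⊤ z^0. -/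

import Mathlib

open Filter Matrix

section DanaAux

variable {n : ℕ}

lemma dot_sum_right' {ι : Type*} (v : Fin n → ℝ) (s : Finset ι) (f : ι → Fin n → ℝ) :
    v ⬝ᵥ (∑ j ∈ s, f j) = ∑ j ∈ s, v ⬝ᵥ f j := by
  simp only [dotProduct, Finset.sum_apply, Finset.mul_sum]
  exact Finset.sum_comm

lemma dot_sum_left' {ι : Type*} (v : Fin n → ℝ) (s : Finset ι) (f : ι → Fin n → ℝ) :
    (∑ j ∈ s, f j) ⬝ᵥ v = ∑ j ∈ s, f j ⬝ᵥ v := by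
  simp only [dotProduct, Finset.sum_apply, Finset.sum_mul]
  exact Finset.sum_comm

lemma mulVec_sum'' {ι : Type*} (R : Matrix (Fin n) (Fin n) ℝ) (s : Finset ι) (f : ι → Fin n → ℝ) :
    R *ᵥ (∑ j ∈ s, f j) = ∑ j ∈ s, R *ᵥ f j := by
  simp only [← Matrix.mulVecLin_apply]
  exact map_sum R.mulVecLin f s

lemma sum_mulVec'' {ι : Type*} (s : Finset ι) (Ms : ι → Matrix (Fin n) (Fin n) ℝ)
    (v : Fin n → ℝ) : (∑ j ∈ s, Ms j) *ᵥ v = ∑ j ∈ s, Ms j *ᵥ v := by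
  ext i
  simp only [Matrix.mulVec, dotProduct, Matrix.sum_apply, Finset.sum_apply, Finset.sum_mul]
  exact Finset.sum_comm

lemma dot_self_nonneg' (v : Fin n → ℝ) : 0 ≤ v ⬝ᵥ v :=
  Finset.sum_nonneg fun i _ => mul_self_nonneg _

lemma dot_self_eq_zero'' {v : Fin n → ℝ} (h : v ⬝ᵥ v = 0) : v = 0 := by
  funext i
  have := Finset.sum_eq_zero_iff_of_nonneg (fun j (_ : j ∈ Finset.univ) => mul_self_nonneg (v j))
  rw [dotProduct] at h
  have h2 := (this.mp h) i (Finset.mem_univ i)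
  have : v i = 0 := by nlinarith
  simpa using this

lemma dot_eq_inner' (x y : EuclideanSpace ℝ (Fin n)) :
    (WithLp.equiv 2 (Fin n → ℝ) x) ⬝ᵥ (WithLp.equiv 2 (Fin n → ℝ) y) = inner ℝ x y := by
  simp [PiLp.inner_apply, dotProduct, mul_comm]

lemma dot_symm_mulVec (L : Matrix (Fin n) (Fin n) ℝ) (hL : L.IsSymm) (x y : Fin n → ℝ) :
    x ⬝ᵥ (L *ᵥ y) = (L *ᵥ x) ⬝ᵥ y := by
  rw [Matrix.dotProduct_mulVec]
  congr 1
  rw [← Matrix.mulVec_transpose, hL]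

lemma eig_abs_le' (N : Matrix (Fin n) (Fin n) ℝ) (hN : N.IsHermitian) (ε : ℝ)
    (h : ∀ v : Fin n → ℝ, |v ⬝ᵥ (N *ᵥ v)| ≤ ε * (v ⬝ᵥ v)) (j : Fin n) :
    |hN.eigenvalues j| ≤ ε := by
  set u : EuclideanSpace ℝ (Fin n) := hN.eigenvectorBasis j with hu
  set v : Fin n → ℝ := WithLp.equiv 2 (Fin n → ℝ) u with hv
  have hmv : N *ᵥ v = hN.eigenvalues j • v := hN.mulVec_eigenvectorBasis j
  have hdot : v ⬝ᵥ v = 1 := by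
    rw [hv, dot_eq_inner', real_inner_self_eq_norm_sq,
      hN.eigenvectorBasis.orthonormal.1 j]
    norm_num
  have := h v
  rw [hmv, dotProduct_smul, smul_eq_mul, hdot, mul_one, mul_one] at this
  exact this

lemma quadform_lower' (N R : Matrix (Fin n) (Fin n) ℝ) (hN : N.IsHermitian) (r : ℝ → ℝ)
    (hR : ∀ (x : Fin n → ℝ) (μ : ℝ), N *ᵥ x = μ • x → R *ᵥ x = r μ • x)
    (c : ℝ) (hc : ∀ j, c ≤ r (hN.eigenvalues j)) (v : Fin n → ℝ) :
    c * (v ⬝ᵥ v) ≤ v ⬝ᵥ (R *ᵥ v) := by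
  set B := hN.eigenvectorBasis with hB
  set w : EuclideanSpace ℝ (Fin n) := (WithLp.equiv 2 (Fin n → ℝ)).symm v with hw
  set cf : Fin n → ℝ := fun j => B.repr w j with hcf
  have hvsum : v = ∑ j, cf j • WithLp.equiv 2 (Fin n → ℝ) (B j) := by
    calc v = WithLp.equiv 2 (Fin n → ℝ) w := rfl
    _ = WithLp.equiv 2 (Fin n → ℝ) (∑ j, cf j • B j) := by rw [B.sum_repr w]
    _ = ∑ j, cf j • WithLp.equiv 2 (Fin n → ℝ) (B j) := by
      simp only [show ∀ x : EuclideanSpace ℝ (Fin n), WithLp.equiv 2 (Fin n → ℝ) x = x.ofLp from fun _ => rfl,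
        WithLp.ofLp_sum, WithLp.ofLp_smul]
  have hRv : R *ᵥ v = ∑ j, (cf j * r (hN.eigenvalues j)) •
      WithLp.equiv 2 (Fin n → ℝ) (B j) := by
    conv_lhs => rw [hvsum]
    rw [mulVec_sum'']
    congr 1; ext j
    rw [mulVec_smul, show WithLp.equiv 2 (Fin n → ℝ) (B j) = (B j).ofLp from rfl, hR _ _ (hN.mulVec_eigenvectorBasis j), smul_smul]
  have hdotbasis : ∀ j k, (WithLp.equiv 2 (Fin n → ℝ) (B j)) ⬝ᵥ (WithLp.equiv 2 (Fin n → ℝ) (B k))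
      = if j = k then 1 else 0 := by
    intro j k
    rw [dot_eq_inner']
    exact orthonormal_iff_ite.mp B.orthonormal j k
  have expand : ∀ s : Fin n → ℝ, v ⬝ᵥ (∑ j, s j • WithLp.equiv 2 (Fin n → ℝ) (B j))
      = ∑ j, cf j * s j := by
    intro s
    rw [dot_sum_right']
    congr 1; ext j
    rw [dotProduct_smul]
    conv_lhs => rw [hvsum]
    rw [dot_sum_left']
    simp only [smul_dotProduct, smul_eq_mul, hdotbasis]
    rw [Finset.sum_eq_single j (fun k _ hkj => by simp [hkj]) (fun hj => by simp at hj)]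
    simp [mul_comm]
  have hvv : v ⬝ᵥ v = ∑ j, cf j * cf j := by
    have := expand cf
    rwa [← hvsum] at this
  rw [hRv, expand, hvv, Finset.mul_sum]
  apply Finset.sum_le_sum
  intro j _
  have h2 : 0 ≤ cf j * cf j := mul_self_nonneg _
  nlinarith [hc j]

lemma taylor_core' (F : ℝ → ℝ) (hF : ContDiff ℝ 2 F) {a c : ℝ} (h : a < c) :
    ∃ ξ, F c = F a + deriv F a * (c - a) + deriv (deriv F) ξ * (c - a) ^ 2 / 2 := by
  have hu : UniqueDiffOn ℝ (Set.Icc a c) := uniqueDiffOn_Icc h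
  have hF1 : ContDiffOn ℝ 1 F (Set.Icc a c) := (hF.of_le (by norm_num)).contDiffOn
  have hd1 : Differentiable ℝ F := hF.differentiable (by norm_num)
  have hd2 : Differentiable ℝ (deriv F) := by
    have := (contDiff_succ_iff_deriv.mp (show ContDiff ℝ (1+1) F by exact_mod_cast hF)).2.2
    exact this.differentiable (by norm_num)
  have heq : Set.EqOn (derivWithin F (Set.Icc a c)) (deriv F) (Set.Icc a c) := by
    intro x hx
    exact ((hd1 x).derivWithin (hu x hx))
  have hiter1 : ∀ x ∈ Set.Icc a c,
      iteratedDerivWithin 1 F (Set.Icc a c) x = derivWithin F (Set.Icc a c) x := by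
    intro x hx
    rw [iteratedDerivWithin_one]
  have hdiff : DifferentiableOn ℝ (iteratedDerivWithin 1 F (Set.Icc a c)) (Set.Ioo a c) := by
    apply DifferentiableOn.congr (f := deriv F)
    · exact hd2.differentiableOn
    · intro x hx
      rw [hiter1 x (Set.Ioo_subset_Icc_self hx), heq (Set.Ioo_subset_Icc_self hx)]
  obtain ⟨ξ, hξ, hval⟩ := taylor_mean_remainder_lagrange (n := 1) h.ne
    (by rw [Set.uIcc_of_le h.le]; exact_mod_cast hF1)
    (by rw [Set.uIcc_of_le h.le, Set.uIoo_of_le h.le]; exact hdiff)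
  rw [Set.uIoo_of_le h.le] at hξ
  rw [Set.uIcc_of_le h.le] at hval
  refine ⟨ξ, ?_⟩
  have h2 : iteratedDerivWithin 2 F (Set.Icc a c) ξ = deriv (deriv F) ξ := by
    have hξ' : ξ ∈ Set.Icc a c := Set.Ioo_subset_Icc_self hξ
    rw [show (2:ℕ) = 1+1 from rfl, iteratedDerivWithin_succ]
    have heqon : Set.EqOn (iteratedDerivWithin 1 F (Set.Icc a c)) (deriv F) (Set.Icc a c) := by
      intro x hx; rw [hiter1 x hx, heq hx]
    rw [derivWithin_congr heqon (heqon hξ')]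
    exact (hd2 ξ).derivWithin (hu ξ hξ')
  have htay : taylorWithinEval F 1 (Set.Icc a c) a c = F a + deriv F a * (c - a) := by
    rw [taylor_within_apply]
    have e1 : iteratedDerivWithin 1 F (Set.Icc a c) a = deriv F a := by
      rw [iteratedDerivWithin_one, heq ⟨le_refl a, le_of_lt h⟩]
    have e0 : iteratedDerivWithin 0 F (Set.Icc a c) a = F a := by
      rw [iteratedDerivWithin_zero]
    simp [Finset.sum_range_succ, e0, e1]
    ring
  rw [htay, h2] at hval
  have hfin : F c = (F a + deriv F a * (c-a)) + deriv (deriv F) ξ * (c-a)^2 / (1+1).factorial := by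
    linarith [hval]
  simpa [Nat.factorial] using hfin

lemma taylor_deg2' (F : ℝ → ℝ) (hF : ContDiff ℝ 2 F) (a b : ℝ) :
    ∃ ξ, F (a + b) = F a + deriv F a * b + deriv (deriv F) ξ * b ^ 2 / 2 := by
  rcases lt_trichotomy b 0 with hb | hb | hb
  · set G : ℝ → ℝ := fun t => F (-t) with hG
    have hGc : ContDiff ℝ 2 G := hF.comp (contDiff_neg)
    have hG1 : ∀ t, deriv G t = -deriv F (-t) := by
      intro t
      have : deriv (fun t => F (-t)) t = -deriv F (-t) := by
        simpa using deriv_comp_neg F t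
      simpa [hG] using this
    have hG2 : ∀ t, deriv (deriv G) t = deriv (deriv F) (-t) := by
      intro t
      have h1 : deriv G = fun t => -deriv F (-t) := funext hG1
      rw [h1]
      have : deriv (fun t => deriv F (-t)) t = -deriv (deriv F) (-t) := by
        simpa using deriv_comp_neg (deriv F) t
      rw [deriv.fun_neg, this]; ring
    obtain ⟨ξ, hξ⟩ := taylor_core' G hGc (a := -a) (c := -a - b) (by linarith)
    refine ⟨-ξ, ?_⟩
    have e1 : G (-a - b) = F (a + b) := by simp [hG]; ring_nf
    have e2 : G (-a) = F a := by simp [hG]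
    rw [e1, e2, hG1, hG2] at hξ
    simp only [neg_neg] at hξ
    rw [hξ]; ring
  · exact ⟨0, by simp [hb]⟩
  · obtain ⟨ξ, hξ⟩ := taylor_core' F hF (a := a) (c := a + b) (by linarith)
    exact ⟨ξ, by rw [hξ]; ring_nf⟩

lemma scalar_phi_bounds' (ε μ : ℝ) (q : ℕ) (hε0 : 0 ≤ ε) (hε1 : ε < 1) (hμ : |μ| ≤ ε) :
    (1 - ε^(q+1))/(1+ε) ≤ ∑ p ∈ Finset.range (q+1), μ^p ∧
    (∑ p ∈ Finset.range (q+1), μ^p) ≤ ∑ p ∈ Finset.range (q+1), ε^p := by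
  have hμε : μ ≤ ε := le_trans (le_abs_self μ) hμ
  have hμε' : -ε ≤ μ := neg_le_of_abs_le hμ
  have hμ1 : μ < 1 := lt_of_le_of_lt hμε hε1
  have hpow : ∀ p : ℕ, μ ^ p ≤ ε ^ p := by
    intro p
    calc μ ^ p ≤ |μ ^ p| := le_abs_self _
    _ = |μ| ^ p := abs_pow μ p
    _ ≤ ε ^ p := pow_le_pow_left₀ (abs_nonneg μ) hμ p
  constructor
  · have hgeo : (∑ p ∈ Finset.range (q+1), μ^p) * (μ - 1) = μ^(q+1) - 1 := geom_sum_mul μ (q+1)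
    have hq : μ^(q+1) ≤ ε^(q+1) := hpow (q+1)
    have hεq : ε^(q+1) < 1 := pow_lt_one₀ hε0 hε1 (Nat.succ_ne_zero q)
    have h1μ : 0 < 1 - μ := by linarith
    have hφ0 : 0 ≤ ∑ p ∈ Finset.range (q+1), μ^p := by nlinarith
    rw [div_le_iff₀ (by linarith : (0:ℝ) < 1 + ε)]
    nlinarith
  · exact Finset.sum_le_sum fun p _ => hpow p

lemma scalar_r_bound' (ε α : ℝ) (q : ℕ) (hε0 : 0 ≤ ε) (hε1 : ε < 1) (hα0 : 0 < α)
    (hsmall : α*(1+ε)/2 * (∑ p ∈ Finset.range (q+1), ε^p) < 1) (μ : ℝ) (hμ : |μ| ≤ ε) :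
    α * ((1-ε^(q+1))/(1+ε)) * (1 - α*(1+ε)/2 * (∑ p ∈ Finset.range (q+1), ε^p))
      ≤ α * (∑ p ∈ Finset.range (q+1), μ^p)
        - α^2*(1+ε)/2 * (∑ p ∈ Finset.range (q+1), μ^p)^2 := by
  obtain ⟨hl, hu⟩ := scalar_phi_bounds' ε μ q hε0 hε1 hμ
  set φ := ∑ p ∈ Finset.range (q+1), μ^p with hφ
  set am := ∑ p ∈ Finset.range (q+1), ε^p with ham
  set amin := (1-ε^(q+1))/(1+ε) with hamin
  have hamin0 : 0 < amin := by
    apply div_pos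
    · have : ε^(q+1) < 1 := pow_lt_one₀ hε0 hε1 (Nat.succ_ne_zero q)
      linarith
    · linarith
  set t := α*(1+ε)/2 with ht
  have ht0 : 0 < t := by positivity
  have key : amin * (1 - t*am) ≤ φ * (1 - t*φ) := by
    have hφ0 : 0 < φ := lt_of_lt_of_le hamin0 hl
    nlinarith [mul_nonneg (sub_nonneg.mpr hl) (le_of_lt (sub_pos.mpr hsmall)),
      mul_nonneg (mul_nonneg (le_of_lt hφ0) (le_of_lt ht0)) (sub_nonneg.mpr hu)]
  have hmul := mul_le_mul_of_nonneg_left key (le_of_lt hα0)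
  calc α * amin * (1 - t*am) = α * (amin * (1 - t*am)) := by ring
  _ ≤ α * (φ * (1 - t*φ)) := hmul
  _ = α * φ - α^2*(1+ε)/2 * φ^2 := by rw [ht]; ring

end DanaAux

section DanaAux2

open Filter Matrix
variable {n : ℕ}

lemma g_taylor (L : Matrix (Fin n) (Fin n) ℝ) (hLsymm : L.IsSymm)
    (f : Fin n → ℝ → ℝ) (hf : ∀ i, ContDiff ℝ 2 (f i)) (x0 u d : Fin n → ℝ) :
    ∃ xt : Fin n → ℝ,
      (∑ i, f i (x0 i + (L *ᵥ (u + d)) i)) =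
        (∑ i, f i (x0 i + (L *ᵥ u) i))
        + d ⬝ᵥ (L *ᵥ fun i => deriv (f i) (x0 i + (L *ᵥ u) i))
        + (1/2) * ((L *ᵥ d) ⬝ᵥ ((Matrix.diagonal fun i => deriv (deriv (f i)) (xt i)) *ᵥ (L *ᵥ d))) := by
  choose xt hxt using fun i => taylor_deg2' (f i) (hf i) (x0 i + (L *ᵥ u) i) ((L *ᵥ d) i)
  refine ⟨xt, ?_⟩
  have hsplit : ∀ i, x0 i + (L *ᵥ (u + d)) i = (x0 i + (L *ᵥ u) i) + (L *ᵥ d) i := by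
    intro i; rw [mulVec_add]; simp only [Pi.add_apply]; ring
  have hdot1 : d ⬝ᵥ (L *ᵥ fun i => deriv (f i) (x0 i + (L *ᵥ u) i))
      = ∑ i, deriv (f i) (x0 i + (L *ᵥ u) i) * (L *ᵥ d) i := by
    rw [dot_symm_mulVec L hLsymm]
    simp only [dotProduct]
    exact Finset.sum_congr rfl fun i _ => mul_comm _ _
  have hdot2 : (L *ᵥ d) ⬝ᵥ ((Matrix.diagonal fun i => deriv (deriv (f i)) (xt i)) *ᵥ (L *ᵥ d))
      = ∑ i, deriv (deriv (f i)) (xt i) * ((L *ᵥ d) i)^2 := by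
    simp only [dotProduct, mulVec_diagonal]
    exact Finset.sum_congr rfl fun i _ => by ring
  rw [hdot1, hdot2]
  calc ∑ i, f i (x0 i + (L *ᵥ (u+d)) i)
      = ∑ i, (f i (x0 i + (L *ᵥ u) i) + deriv (f i) (x0 i + (L *ᵥ u) i) * (L *ᵥ d) i
          + deriv (deriv (f i)) (xt i) * ((L *ᵥ d) i)^2 / 2) := by
        refine Finset.sum_congr rfl fun i _ => ?_
        rw [hsplit i]; exact hxt i
  _ = (∑ i, f i (x0 i + (L *ᵥ u) i)) + (∑ i, deriv (f i) (x0 i + (L *ᵥ u) i) * (L *ᵥ d) i)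
      + (1/2) * ∑ i, deriv (deriv (f i)) (xt i) * ((L *ᵥ d) i)^2 := by
        rw [Finset.sum_add_distrib, Finset.sum_add_distrib, Finset.mul_sum]
        congr 1
        exact Finset.sum_congr rfl fun i _ => by ring

lemma step_core {n : ℕ} (hn : 0 < n) (q : ℕ) (L Hk : Matrix (Fin n) (Fin n) ℝ)
    (hLsymm : L.IsSymm) (hHsymm : Hk.IsSymm)
    (hL1 : L *ᵥ (fun _ => (1:ℝ)) = 0)
    (ε α : ℝ) (hε0 : 0 ≤ ε) (hε1 : ε < 1) (hα0 : 0 < α)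
    (hspec' : ∀ v : Fin n → ℝ, (∑ i, v i) = 0 → |v ⬝ᵥ ((1 - L * Hk * L) *ᵥ v)| ≤ ε * (v ⬝ᵥ v))
    (hsmall : α*(1+ε)/2 * (∑ p ∈ Finset.range (q+1), ε^p) < 1)
    (v : Fin n → ℝ) (hv : (∑ i, v i) = 0) :
    (∑ i, ((∑ p ∈ Finset.range (q+1), (1 - L * Hk * L)^p) *ᵥ v) i) = 0 ∧
    α * ((1-ε^(q+1))/(1+ε)) * (1 - α*(1+ε)/2 * (∑ p ∈ Finset.range (q+1), ε^p)) * (v ⬝ᵥ v)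
      ≤ α * (v ⬝ᵥ ((∑ p ∈ Finset.range (q+1), (1 - L * Hk * L)^p) *ᵥ v))
        - α^2*(1+ε)/2 * (((∑ p ∈ Finset.range (q+1), (1 - L * Hk * L)^p) *ᵥ v)
            ⬝ᵥ ((∑ p ∈ Finset.range (q+1), (1 - L * Hk * L)^p) *ᵥ v)) := by
  set M : Matrix (Fin n) (Fin n) ℝ := 1 - L * Hk * L with hM
  set J : Matrix (Fin n) (Fin n) ℝ := Matrix.of (fun _ _ => (1:ℝ)) with hJ
  set N : Matrix (Fin n) (Fin n) ℝ := M - (n:ℝ)⁻¹ • J with hN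
  -- sum of entries of L *ᵥ w is 0
  have h_sumLv : ∀ w : Fin n → ℝ, ∑ i, (L *ᵥ w) i = 0 := by
    intro w
    have h1 : ∑ i, (L *ᵥ w) i = (fun _ => (1:ℝ)) ⬝ᵥ (L *ᵥ w) := by
      simp [dotProduct]
    rw [h1, dot_symm_mulVec L hLsymm, hL1, zero_dotProduct]
  have hMv : ∀ w : Fin n → ℝ, M *ᵥ w = w - L *ᵥ (Hk *ᵥ (L *ᵥ w)) := by
    intro w
    rw [hM, sub_mulVec, one_mulVec, mulVec_mulVec, mulVec_mulVec]
  have hMsum : ∀ w : Fin n → ℝ, ∑ i, (M *ᵥ w) i = ∑ i, w i := by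
    intro w
    rw [hMv]
    simp only [Pi.sub_apply]
    rw [Finset.sum_sub_distrib, h_sumLv]
    ring
  have hJv : ∀ w : Fin n → ℝ, J *ᵥ w = fun _ => ∑ i, w i := by
    intro w; funext i
    simp [hJ, Matrix.mulVec, dotProduct]
  have hNv : ∀ w : Fin n → ℝ, (∑ i, w i) = 0 → N *ᵥ w = M *ᵥ w := by
    intro w hw
    rw [hN, sub_mulVec, smul_mulVec, hJv, hw]
    rw [show ((n:ℝ)⁻¹ • fun _ : Fin n => (0:ℝ)) = 0 by funext i; simp, sub_zero]
  have hNsum : ∀ w : Fin n → ℝ, (∑ i, w i) = 0 → ∑ i, (N *ᵥ w) i = 0 := by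
    intro w hw
    rw [hNv w hw, hMsum, hw]
  have hNpow : ∀ (p : ℕ) (w : Fin n → ℝ), (∑ i, w i) = 0 →
      N^p *ᵥ w = M^p *ᵥ w ∧ (∑ i, (N^p *ᵥ w) i) = 0 := by
    intro p
    induction p with
    | zero => intro w hw; simp [hw]
    | succ p ih =>
      intro w hw
      have h1 : N^(p+1) *ᵥ w = N^p *ᵥ (N *ᵥ w) := by
        rw [pow_succ, ← mulVec_mulVec]
      have h2 : M^(p+1) *ᵥ w = M^p *ᵥ (M *ᵥ w) := by
        rw [pow_succ, ← mulVec_mulVec]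
      have hsw : ∑ i, (N *ᵥ w) i = 0 := hNsum w hw
      obtain ⟨ih1, ih2⟩ := ih (N *ᵥ w) hsw
      constructor
      · rw [h1, h2, ih1, hNv w hw]
      · rw [h1, ih2]
  -- identification on sum-zero vectors
  set Φ : Matrix (Fin n) (Fin n) ℝ := ∑ p ∈ Finset.range (q+1), N^p with hΦ
  have hAv : (∑ p ∈ Finset.range (q+1), M^p) *ᵥ v = Φ *ᵥ v := by
    rw [hΦ, sum_mulVec'', sum_mulVec'']
    exact Finset.sum_congr rfl fun p _ => ((hNpow p v hv).1).symm
  have hΦsum : ∑ i, (Φ *ᵥ v) i = 0 := by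
    rw [hΦ, sum_mulVec'']
    simp only [Finset.sum_apply]
    rw [Finset.sum_comm]
    apply Finset.sum_eq_zero
    intro p _
    exact (hNpow p v hv).2
  -- symmetry facts
  have hLHLsymm : (L * Hk * L).IsSymm := by
    unfold Matrix.IsSymm
    rw [transpose_mul, transpose_mul, hLsymm, hHsymm, Matrix.mul_assoc]
  have hMsymm : M.IsSymm := by
    unfold Matrix.IsSymm
    rw [hM, transpose_sub, transpose_one, hLHLsymm]
  have hNsymm : N.IsSymm := by
    unfold Matrix.IsSymm
    rw [hN, transpose_sub, transpose_smul, hMsymm]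
    congr 1
  have hNherm : N.IsHermitian := by
    unfold Matrix.IsHermitian
    rw [Matrix.conjTranspose_eq_transpose_of_trivial]
    exact hNsymm
  have hΦsymm : Φ.IsSymm := by
    unfold Matrix.IsSymm
    rw [hΦ, Matrix.transpose_sum]
    exact Finset.sum_congr rfl fun p _ => by rw [Matrix.transpose_pow, hNsymm]
  -- global quadratic bound for N
  have hNbound : ∀ w : Fin n → ℝ, |w ⬝ᵥ (N *ᵥ w)| ≤ ε * (w ⬝ᵥ w) := by
    intro w
    set s : ℝ := (∑ i, w i) / n with hs
    set Pw : Fin n → ℝ := w - s • (fun _ => (1:ℝ)) with hPw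
    have hns : (n:ℝ) * s = ∑ i, w i := by
      rw [hs]; field_simp
    have hPsum : ∑ i, Pw i = 0 := by
      rw [hPw]
      simp only [Pi.sub_apply, Pi.smul_apply, smul_eq_mul, mul_one]
      rw [Finset.sum_sub_distrib, Finset.sum_const, Finset.card_univ, Fintype.card_fin,
        nsmul_eq_mul, ← hns]
      ring
    have hM1 : M *ᵥ (fun _ => (1:ℝ)) = fun _ => (1:ℝ) := by
      rw [hMv, hL1, mulVec_zero, mulVec_zero, sub_zero]
    have hNMP : N *ᵥ w = M *ᵥ Pw := by
      rw [hN, sub_mulVec, smul_mulVec, hJv]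
      rw [hPw, Matrix.mulVec_sub, Matrix.mulVec_smul, hM1]
      congr 1
      funext i
      simp only [Pi.smul_apply, smul_eq_mul, mul_one]
      rw [hs]
      field_simp
    have hdotNw : w ⬝ᵥ (N *ᵥ w) = Pw ⬝ᵥ (M *ᵥ Pw) := by
      rw [hNMP]
      have hwPw : w = Pw + s • (fun _ => (1:ℝ)) := by rw [hPw]; abel
      conv_lhs => rw [hwPw]
      rw [add_dotProduct, smul_dotProduct]
      have hone : (fun _ => (1:ℝ)) ⬝ᵥ (M *ᵥ Pw) = 0 := by
        rw [dot_symm_mulVec M hMsymm, hM1]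
        simp only [dotProduct, one_mul]
        exact hPsum
      rw [hone, smul_eq_mul, mul_zero, add_zero]
    have hPP : Pw ⬝ᵥ Pw = w ⬝ᵥ w - (n:ℝ) * s^2 := by
      have hterm : ∀ i, Pw i * Pw i = w i * w i - 2*s*(w i) + s^2 := by
        intro i
        simp only [hPw, Pi.sub_apply, Pi.smul_apply, smul_eq_mul, mul_one]
        ring
      simp only [dotProduct]
      rw [Finset.sum_congr rfl (fun i _ => hterm i)]
      rw [Finset.sum_add_distrib, Finset.sum_sub_distrib, ← Finset.mul_sum, ← hns,
        Finset.sum_const, Finset.card_univ, Fintype.card_fin, nsmul_eq_mul]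
      ring
    rw [hdotNw]
    calc |Pw ⬝ᵥ (M *ᵥ Pw)| ≤ ε * (Pw ⬝ᵥ Pw) := hspec' Pw hPsum
    _ ≤ ε * (w ⬝ᵥ w) := by
        apply mul_le_mul_of_nonneg_left _ hε0
        rw [hPP]
        nlinarith [sq_nonneg s, Nat.cast_nonneg (α := ℝ) n]
  -- eigen action of R
  set κ : ℝ := α^2*(1+ε)/2 with hκ
  set R : Matrix (Fin n) (Fin n) ℝ := α • Φ - κ • (Φ * Φ) with hR
  have hNpowx : ∀ (p : ℕ) (x : Fin n → ℝ) (μ : ℝ), N *ᵥ x = μ • x → N^p *ᵥ x = μ^p • x := by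
    intro p
    induction p with
    | zero => intro x μ _; simp
    | succ p ih =>
      intro x μ hx
      rw [pow_succ, ← mulVec_mulVec, hx, mulVec_smul, ih x μ hx, smul_smul, pow_succ]
      ring_nf
  have hΦx : ∀ (x : Fin n → ℝ) (μ : ℝ), N *ᵥ x = μ • x →
      Φ *ᵥ x = (∑ p ∈ Finset.range (q+1), μ^p) • x := by
    intro x μ hx
    rw [hΦ, sum_mulVec'']
    rw [Finset.sum_congr rfl (fun p _ => hNpowx p x μ hx), ← Finset.sum_smul]
  have hRx : ∀ (x : Fin n → ℝ) (μ : ℝ), N *ᵥ x = μ • x →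
      R *ᵥ x = (α * (∑ p ∈ Finset.range (q+1), μ^p)
        - κ * (∑ p ∈ Finset.range (q+1), μ^p)^2) • x := by
    intro x μ hx
    have h1 := hΦx x μ hx
    have h2 : (Φ * Φ) *ᵥ x = ((∑ p ∈ Finset.range (q+1), μ^p)^2) • x := by
      rw [← mulVec_mulVec, h1, mulVec_smul, h1, smul_smul, sq]
    rw [hR, sub_mulVec, smul_mulVec, smul_mulVec, h1, h2,
      smul_smul, smul_smul, sub_smul]
  -- apply quadform bound
  set amin : ℝ := (1-ε^(q+1))/(1+ε) with hamin
  set amax : ℝ := ∑ p ∈ Finset.range (q+1), ε^p with hamax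
  have hquad : (α * amin * (1 - α*(1+ε)/2 * amax)) * (v ⬝ᵥ v) ≤ v ⬝ᵥ (R *ᵥ v) := by
    apply quadform_lower' N R hNherm
      (fun μ => α * (∑ p ∈ Finset.range (q+1), μ^p) - κ * (∑ p ∈ Finset.range (q+1), μ^p)^2)
      hRx
    intro j
    have habs := eig_abs_le' N hNherm ε hNbound j
    have := scalar_r_bound' ε α q hε0 hε1 hα0 hsmall (hNherm.eigenvalues j) habs
    rw [hκ]
    exact this
  -- convert to the Φ form
  have hRv : v ⬝ᵥ (R *ᵥ v) = α * (v ⬝ᵥ (Φ *ᵥ v)) - κ * ((Φ *ᵥ v) ⬝ᵥ (Φ *ᵥ v)) := by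
    have hPhi2 : v ⬝ᵥ ((Φ * Φ) *ᵥ v) = (Φ *ᵥ v) ⬝ᵥ (Φ *ᵥ v) := by
      rw [← mulVec_mulVec, dot_symm_mulVec Φ hΦsymm]
    rw [hR, sub_mulVec, smul_mulVec, smul_mulVec, dotProduct_sub,
      dotProduct_smul, dotProduct_smul, smul_eq_mul, smul_eq_mul, hPhi2]
  constructor
  · rw [hAv]; exact hΦsum
  · rw [hAv, hκ] at *
    rw [hRv] at hquad
    calc α * amin * (1 - α*(1+ε)/2 * amax) * (v ⬝ᵥ v)
        ≤ α * (v ⬝ᵥ (Φ *ᵥ v)) - α^2*(1+ε)/2 * ((Φ *ᵥ v) ⬝ᵥ (Φ *ᵥ v)) := hquad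
    _ = α * (v ⬝ᵥ (Φ *ᵥ v)) - α^2*(1+ε)/2 * ((Φ *ᵥ v) ⬝ᵥ (Φ *ᵥ v)) := rfl

end DanaAux2

section DanaMain
open Filter Matrix
set_option maxHeartbeats 1000000

/-- **DANA-D asymptotic convergence** (Theorem: Convergence of DANA-D).
Under the spectral assumption on `I - L H(x) L` restricted to the subspace orthogonal
to `1`, the DANA-D iteration with small enough step size converges to the unique
minimizer of `g` whose coordinate sum matches that of the initial condition. -/
theorem dana_d_convergence
    (n : ℕ) (hn : 2 ≤ n)
    (L : Matrix (Fin n) (Fin n) ℝ)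
    (hLsymm : L.IsSymm) (hLpsd : L.PosSemidef)
    (hL1 : L *ᵥ (fun _ => (1 : ℝ)) = 0)
    (hLker : ∀ v : Fin n → ℝ, L *ᵥ v = 0 → ∃ c : ℝ, v = fun _ => c)
    (f : Fin n → ℝ → ℝ) (δ Δ : Fin n → ℝ)
    (hf : ∀ i, ContDiff ℝ 2 (f i))
    (hδ : ∀ i, 0 < δ i)
    (hbounds : ∀ i s, δ i ≤ deriv (deriv (f i)) s ∧ deriv (deriv (f i)) s ≤ Δ i)
    (x0 : Fin n → ℝ)
    (g : (Fin n → ℝ) → ℝ)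
    (hg : g = fun z => ∑ i, f i (x0 i + (L *ᵥ z) i))
    (H : (Fin n → ℝ) → Matrix (Fin n) (Fin n) ℝ)
    (hH : H = fun x => Matrix.diagonal fun i => deriv (deriv (f i)) (x i))
    (gradg : (Fin n → ℝ) → (Fin n → ℝ))
    (hgradg : gradg = fun z => L *ᵥ fun i => deriv (f i) (x0 i + (L *ᵥ z) i))
    (q : ℕ)
    (A : (Fin n → ℝ) → Matrix (Fin n) (Fin n) ℝ)
    (hA : A = fun z => ∑ p ∈ Finset.range (q + 1),
      (1 - L * H (fun i => x0 i + (L *ᵥ z) i) * L) ^ p)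
    (ε : ℝ) (hε0 : 0 ≤ ε) (hε1 : ε < 1)
    (hspec : ∀ x v : Fin n → ℝ, (∑ i, v i) = 0 →
      |v ⬝ᵥ ((1 - L * H x * L) *ᵥ v)| ≤ ε * (v ⬝ᵥ v))
    (α : ℝ) (hα0 : 0 < α)
    (hα : α < 2 * (1 - ε) / ((n - 1 : ℝ) * (1 + ε) * (1 - ε ^ (q + 1))))
    (z0 : Fin n → ℝ) (z : ℕ → Fin n → ℝ)
    (hz0 : z 0 = z0)
    (hiter : ∀ k, z (k + 1) = z k - α • (A (z k) *ᵥ gradg (z k))) :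
    ∃ zstar : Fin n → ℝ,
      (∀ w, g zstar ≤ g w) ∧ (∑ i, zstar i = ∑ i, z0 i) ∧
      (∀ w, (∀ w', g w ≤ g w') → (∑ i, w i = ∑ i, z0 i) → w = zstar) ∧
      Tendsto z atTop (nhds zstar) := by
  have hn0 : 0 < n := by omega
  have hone_le : (1:ℝ) ≤ (n:ℝ) - 1 := by
    have h2n : (2:ℝ) ≤ (n:ℝ) := by exact_mod_cast hn
    linarith
  have h1ε : (0:ℝ) < 1 - ε := by linarith
  have h1ε' : (0:ℝ) < 1 + ε := by linarith
  -- geometric quantities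
  set amax : ℝ := ∑ p ∈ Finset.range (q+1), ε^p with hamax
  have hamax1 : (1:ℝ) ≤ amax := by
    rw [hamax]
    calc (1:ℝ) = ∑ p ∈ Finset.range 1, ε^p := by simp
    _ ≤ _ := Finset.sum_le_sum_of_subset_of_nonneg
        (Finset.range_subset_range.mpr (by omega)) (fun p _ _ => pow_nonneg hε0 p)
  have hamax0 : (0:ℝ) < amax := by linarith
  have hεq1 : ε^(q+1) < 1 := pow_lt_one₀ hε0 hε1 (Nat.succ_ne_zero q)
  have hgeo : 1 - ε^(q+1) = (1-ε) * amax := by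
    rw [hamax]
    linear_combination geom_sum_mul ε (q+1)
  have hαlt : α * (((n:ℝ)-1)*(1+ε)*(1-ε^(q+1))) < 2*(1-ε) := by
    have hDpos : (0:ℝ) < ((n:ℝ)-1)*(1+ε)*(1-ε^(q+1)) := by
      apply mul_pos (mul_pos (by linarith) h1ε') (by linarith)
    exact (lt_div_iff₀ hDpos).mp hα
  have hsmall : α*(1+ε)/2 * amax < 1 := by
    have key1 : α*(1+ε)*amax*((n:ℝ)-1)*(1-ε) < 2*(1-ε) := by
      calc α*(1+ε)*amax*((n:ℝ)-1)*(1-ε) = α * (((n:ℝ)-1)*(1+ε)*((1-ε)*amax)) := by ring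
      _ = α * (((n:ℝ)-1)*(1+ε)*(1-ε^(q+1))) := by rw [← hgeo]
      _ < 2*(1-ε) := hαlt
    have key2 : α*(1+ε)*amax*((n:ℝ)-1) < 2 := by
      exact lt_of_mul_lt_mul_right (by linarith [key1]) (le_of_lt h1ε)
    have hX : (0:ℝ) < α*(1+ε)*amax := by positivity
    nlinarith
  set amin : ℝ := (1-ε^(q+1))/(1+ε) with hamin
  have hamin0 : (0:ℝ) < amin := div_pos (by linarith) h1ε'
  set c0 : ℝ := α * amin * (1 - α*(1+ε)/2 * amax) with hc0def
  have hc00 : (0:ℝ) < c0 := by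
    apply mul_pos (mul_pos hα0 hamin0)
    linarith
  -- basic sum-zero facts
  have h_sumLv : ∀ w : Fin n → ℝ, ∑ i, (L *ᵥ w) i = 0 := by
    intro w
    have h1 : ∑ i, (L *ᵥ w) i = (fun _ => (1:ℝ)) ⬝ᵥ (L *ᵥ w) := by
      simp [dotProduct]
    rw [h1, dot_symm_mulVec L hLsymm, hL1, zero_dotProduct]
  -- quadratic form bounds from the spectral assumption
  have hQB : ∀ (x d : Fin n → ℝ), (∑ i, d i) = 0 →
      (1-ε) * (d ⬝ᵥ d) ≤ (L *ᵥ d) ⬝ᵥ ((Matrix.diagonal fun i => deriv (deriv (f i)) (x i)) *ᵥ (L *ᵥ d)) ∧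
      (L *ᵥ d) ⬝ᵥ ((Matrix.diagonal fun i => deriv (deriv (f i)) (x i)) *ᵥ (L *ᵥ d)) ≤ (1+ε) * (d ⬝ᵥ d) := by
    intro x d hd
    have hs := hspec x d hd
    rw [hH] at hs
    have hexp : d ⬝ᵥ ((1 - L * (Matrix.diagonal fun i => deriv (deriv (f i)) (x i)) * L) *ᵥ d)
        = d ⬝ᵥ d - (L *ᵥ d) ⬝ᵥ ((Matrix.diagonal fun i => deriv (deriv (f i)) (x i)) *ᵥ (L *ᵥ d)) := by
      rw [sub_mulVec, one_mulVec, dotProduct_sub]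
      congr 1
      rw [← mulVec_mulVec, ← mulVec_mulVec, dot_symm_mulVec L hLsymm]
    rw [hexp] at hs
    have habs := abs_le.mp hs
    constructor <;> linarith [habs.1, habs.2]
  have hQpos : ∀ (x w : Fin n → ℝ),
      0 ≤ w ⬝ᵥ ((Matrix.diagonal fun i => deriv (deriv (f i)) (x i)) *ᵥ w) := by
    intro x w
    simp only [dotProduct, mulVec_diagonal]
    apply Finset.sum_nonneg
    intro i _
    have h1 := (hbounds i (x i)).1
    have h2 := hδ i
    nlinarith [mul_self_nonneg (w i)]
  -- convexity / smoothness / strong convexity inequalities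
  have hC1 : ∀ u d : Fin n → ℝ,
      (∑ i, f i (x0 i + (L *ᵥ u) i)) + d ⬝ᵥ (L *ᵥ fun i => deriv (f i) (x0 i + (L *ᵥ u) i))
        ≤ ∑ i, f i (x0 i + (L *ᵥ (u + d)) i) := by
    intro u d
    obtain ⟨xt, hxt⟩ := g_taylor L hLsymm f hf x0 u d
    rw [hxt]
    have := hQpos xt (L *ᵥ d)
    linarith
  have hC2 : ∀ u d : Fin n → ℝ, (∑ i, d i) = 0 →
      (∑ i, f i (x0 i + (L *ᵥ (u + d)) i)) ≤ (∑ i, f i (x0 i + (L *ᵥ u) i))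
        + d ⬝ᵥ (L *ᵥ fun i => deriv (f i) (x0 i + (L *ᵥ u) i)) + (1+ε)/2 * (d ⬝ᵥ d) := by
    intro u d hd
    obtain ⟨xt, hxt⟩ := g_taylor L hLsymm f hf x0 u d
    rw [hxt]
    have := (hQB xt d hd).2
    linarith
  have hC3 : ∀ u d : Fin n → ℝ, (∑ i, d i) = 0 →
      (∑ i, f i (x0 i + (L *ᵥ u) i)) + d ⬝ᵥ (L *ᵥ fun i => deriv (f i) (x0 i + (L *ᵥ u) i))
        + (1-ε)/2 * (d ⬝ᵥ d) ≤ ∑ i, f i (x0 i + (L *ᵥ (u + d)) i) := by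
    intro u d hd
    obtain ⟨xt, hxt⟩ := g_taylor L hLsymm f hf x0 u d
    rw [hxt]
    have := (hQB xt d hd).1
    linarith
  have hC4 : ∀ u w : Fin n → ℝ, (∑ i, (u - w) i) = 0 →
      (1-ε) * ((u-w) ⬝ᵥ (u-w)) ≤
      ((L *ᵥ fun i => deriv (f i) (x0 i + (L *ᵥ u) i))
        - (L *ᵥ fun i => deriv (f i) (x0 i + (L *ᵥ w) i))) ⬝ᵥ (u - w) := by
    intro u w hsw
    have hsw2 : ∑ i, (w - u) i = 0 := by
      simp only [Pi.sub_apply] at hsw ⊢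
      rw [Finset.sum_sub_distrib] at hsw ⊢
      linarith
    have h1 := hC3 w (u - w) hsw
    have h2 := hC3 u (w - u) hsw2
    rw [show w + (u - w) = u from by abel] at h1
    rw [show u + (w - u) = w from by abel] at h2
    have hQ' : (w - u) ⬝ᵥ (w - u) = (u - w) ⬝ᵥ (u - w) := by
      rw [show w - u = -(u-w) from by abel, neg_dotProduct, dotProduct_neg, neg_neg]
    rw [hQ'] at h2
    have hneg : (w - u) ⬝ᵥ (L *ᵥ fun i => deriv (f i) (x0 i + (L *ᵥ u) i))
        = -((u - w) ⬝ᵥ (L *ᵥ fun i => deriv (f i) (x0 i + (L *ᵥ u) i))) := by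
      rw [show w - u = -(u-w) from by abel, neg_dotProduct]
    rw [hneg] at h2
    have hgoal : ((L *ᵥ fun i => deriv (f i) (x0 i + (L *ᵥ u) i))
        - (L *ᵥ fun i => deriv (f i) (x0 i + (L *ᵥ w) i))) ⬝ᵥ (u - w)
        = (u - w) ⬝ᵥ (L *ᵥ fun i => deriv (f i) (x0 i + (L *ᵥ u) i))
          - (u - w) ⬝ᵥ (L *ᵥ fun i => deriv (f i) (x0 i + (L *ᵥ w) i)) := by
      rw [sub_dotProduct, dotProduct_comm,
        dotProduct_comm (L *ᵥ fun i => deriv (f i) (x0 i + (L *ᵥ w) i))]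
    rw [hgoal]
    linarith
  -- per-step matrix inequality
  have hstep : ∀ zk v : Fin n → ℝ, (∑ i, v i) = 0 →
      (∑ i, ((∑ p ∈ Finset.range (q+1),
        (1 - L * (Matrix.diagonal fun i => deriv (deriv (f i)) (x0 i + (L *ᵥ zk) i)) * L)^p) *ᵥ v) i) = 0 ∧
      c0 * (v ⬝ᵥ v)
        ≤ α * (v ⬝ᵥ ((∑ p ∈ Finset.range (q+1),
            (1 - L * (Matrix.diagonal fun i => deriv (deriv (f i)) (x0 i + (L *ᵥ zk) i)) * L)^p) *ᵥ v))
          - α^2*(1+ε)/2 * (((∑ p ∈ Finset.range (q+1),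
              (1 - L * (Matrix.diagonal fun i => deriv (deriv (f i)) (x0 i + (L *ᵥ zk) i)) * L)^p) *ᵥ v)
            ⬝ᵥ ((∑ p ∈ Finset.range (q+1),
              (1 - L * (Matrix.diagonal fun i => deriv (deriv (f i)) (x0 i + (L *ᵥ zk) i)) * L)^p) *ᵥ v)) := by
    intro zk v hv
    have hHsym : (Matrix.diagonal fun i => deriv (deriv (f i)) (x0 i + (L *ᵥ zk) i)).IsSymm :=
      Matrix.diagonal_transpose _
    have hspec'' : ∀ w : Fin n → ℝ, (∑ i, w i) = 0 →
        |w ⬝ᵥ ((1 - L * (Matrix.diagonal fun i => deriv (deriv (f i)) (x0 i + (L *ᵥ zk) i)) * L) *ᵥ w)|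
          ≤ ε * (w ⬝ᵥ w) := by
      intro w hw
      have := hspec (fun i => x0 i + (L *ᵥ zk) i) w hw
      rw [hH] at this
      exact this
    have h := step_core hn0 q L _ hLsymm hHsym hL1 ε α hε0 hε1 hα0 hspec'' hsmall v hv
    rw [← hamax, ← hamin, ← hc0def] at h
    exact h
  -- normalized iteration
  have hiter' : ∀ k, z (k+1) = z k - α • ((∑ p ∈ Finset.range (q+1),
      (1 - L * (Matrix.diagonal fun i => deriv (deriv (f i)) (x0 i + (L *ᵥ (z k)) i)) * L)^p)
      *ᵥ (L *ᵥ fun i => deriv (f i) (x0 i + (L *ᵥ (z k)) i))) := by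
    intro k
    have := hiter k
    rw [hA, hgradg, hH] at this
    exact this
  -- gradient sum-zero
  have hGsum : ∀ k, ∑ i, (L *ᵥ fun i => deriv (f i) (x0 i + (L *ᵥ (z k)) i)) i = 0 :=
    fun k => h_sumLv _
  -- coordinate-sum invariance
  have hsum_z : ∀ k, ∑ i, z k i = ∑ i, z 0 i := by
    intro k
    induction k with
    | zero => rfl
    | succ k ih =>
      rw [hiter' k]
      simp only [Pi.sub_apply, Pi.smul_apply, smul_eq_mul]
      rw [Finset.sum_sub_distrib, ← Finset.mul_sum,
        (hstep (z k) _ (hGsum k)).1, mul_zero, sub_zero, ih]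
  -- descent inequality
  have hdec : ∀ k, (∑ i, f i (x0 i + (L *ᵥ (z (k+1))) i))
      + c0 * ((L *ᵥ fun i => deriv (f i) (x0 i + (L *ᵥ (z k)) i))
          ⬝ᵥ (L *ᵥ fun i => deriv (f i) (x0 i + (L *ᵥ (z k)) i)))
      ≤ ∑ i, f i (x0 i + (L *ᵥ (z k)) i) := by
    intro k
    set Gk : Fin n → ℝ := L *ᵥ fun i => deriv (f i) (x0 i + (L *ᵥ (z k)) i) with hGk
    set w : Fin n → ℝ := (∑ p ∈ Finset.range (q+1),
      (1 - L * (Matrix.diagonal fun i => deriv (deriv (f i)) (x0 i + (L *ᵥ (z k)) i)) * L)^p) *ᵥ Gk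
      with hw
    obtain ⟨hwsum, hwineq⟩ := hstep (z k) Gk (hGsum k)
    rw [← hw] at hwsum hwineq
    have hzk1 : z (k+1) = z k + (-α) • w := by
      rw [hiter' k, ← hGk, ← hw, sub_eq_add_neg, ← neg_smul]
    have hsumd : ∑ i, ((-α) • w) i = 0 := by
      simp only [Pi.smul_apply, smul_eq_mul]
      rw [← Finset.mul_sum, hwsum, mul_zero]
    have h2 := hC2 (z k) ((-α) • w) hsumd
    rw [← hzk1, ← hGk] at h2
    have e1 : ((-α) • w) ⬝ᵥ Gk = -(α * (Gk ⬝ᵥ w)) := by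
      rw [smul_dotProduct, smul_eq_mul, dotProduct_comm]; ring
    have e2 : ((-α) • w) ⬝ᵥ ((-α) • w) = α^2 * (w ⬝ᵥ w) := by
      rw [smul_dotProduct, dotProduct_smul, smul_eq_mul, smul_eq_mul]; ring
    rw [e1, e2] at h2
    set a1 : ℝ := Gk ⬝ᵥ w with ha1
    set a2 : ℝ := w ⬝ᵥ w with ha2
    set a3 : ℝ := Gk ⬝ᵥ Gk with ha3
    linarith [h2, hwineq]
  -- uniform lower bound
  have hlow : ∀ k, (∑ i, f i (x0 i + (L *ᵥ (z 0)) i))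
      - 1/(2*(1-ε)) * ((L *ᵥ fun i => deriv (f i) (x0 i + (L *ᵥ (z 0)) i))
          ⬝ᵥ (L *ᵥ fun i => deriv (f i) (x0 i + (L *ᵥ (z 0)) i)))
      ≤ ∑ i, f i (x0 i + (L *ᵥ (z k)) i) := by
    intro k
    set G0 : Fin n → ℝ := L *ᵥ fun i => deriv (f i) (x0 i + (L *ᵥ (z 0)) i) with hG0
    set d : Fin n → ℝ := z k - z 0 with hd
    have hdsum : ∑ i, d i = 0 := by
      rw [hd]
      simp only [Pi.sub_apply]
      rw [Finset.sum_sub_distrib, hsum_z k]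
      ring
    have h3 := hC3 (z 0) d hdsum
    rw [show z 0 + d = z k from by rw [hd]; abel, ← hG0] at h3
    have hexp : ((1-ε) • d + G0) ⬝ᵥ ((1-ε) • d + G0)
        = (1-ε)^2 * (d ⬝ᵥ d) + 2*(1-ε)*(d ⬝ᵥ G0) + G0 ⬝ᵥ G0 := by
      simp only [dotProduct, Pi.add_apply, Pi.smul_apply, smul_eq_mul, Finset.mul_sum]
      rw [← Finset.sum_add_distrib, ← Finset.sum_add_distrib]
      exact Finset.sum_congr rfl fun i _ => by ring
    have hpos := dot_self_nonneg' ((1-ε) • d + G0)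
    rw [hexp] at hpos
    have h2μ : (0:ℝ) < 2*(1-ε) := by linarith
    have heq : ((1-ε)^2 * (d ⬝ᵥ d) + 2*(1-ε)*(d ⬝ᵥ G0) + G0 ⬝ᵥ G0) / (2*(1-ε))
        = d ⬝ᵥ G0 + (1-ε)/2*(d ⬝ᵥ d) + 1/(2*(1-ε))*(G0 ⬝ᵥ G0) := by
      field_simp
      ring
    have hquadmin := div_nonneg hpos h2μ.le
    rw [heq] at hquadmin
    linarith [h3, hquadmin]
  -- the values converge
  set gs : ℕ → ℝ := fun k => ∑ i, f i (x0 i + (L *ᵥ (z k)) i) with hgs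
  have hanti : Antitone gs := by
    apply antitone_nat_of_succ_le
    intro k
    have h1 := hdec k
    have h2 : 0 ≤ c0 * ((L *ᵥ fun i => deriv (f i) (x0 i + (L *ᵥ (z k)) i))
        ⬝ᵥ (L *ᵥ fun i => deriv (f i) (x0 i + (L *ᵥ (z k)) i))) :=
      mul_nonneg hc00.le (dot_self_nonneg' _)
    rw [hgs]
    linarith
  have hbdd : BddBelow (Set.range gs) := by
    refine ⟨(∑ i, f i (x0 i + (L *ᵥ (z 0)) i))
      - 1/(2*(1-ε)) * ((L *ᵥ fun i => deriv (f i) (x0 i + (L *ᵥ (z 0)) i))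
          ⬝ᵥ (L *ᵥ fun i => deriv (f i) (x0 i + (L *ᵥ (z 0)) i))), ?_⟩
    rintro x ⟨k, rfl⟩
    exact hlow k
  have hgs_tend : Tendsto gs atTop (nhds (⨅ k, gs k)) := tendsto_atTop_ciInf hanti hbdd
  have hgs_tend' : Tendsto (fun k => gs (k+1)) atTop (nhds (⨅ k, gs k)) :=
    hgs_tend.comp (Filter.tendsto_add_atTop_nat 1)
  have hdiff0 : Tendsto (fun k => gs k - gs (k+1)) atTop (nhds 0) := by
    have := hgs_tend.sub hgs_tend'
    simpa using this
  -- gradient norms tend to zero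
  have hGG0 : Tendsto (fun k => (L *ᵥ fun i => deriv (f i) (x0 i + (L *ᵥ (z k)) i))
      ⬝ᵥ (L *ᵥ fun i => deriv (f i) (x0 i + (L *ᵥ (z k)) i))) atTop (nhds 0) := by
    apply squeeze_zero (fun k => dot_self_nonneg' _) (g := fun k => c0⁻¹ * (gs k - gs (k+1)))
    · intro k
      have h1 := hdec k
      have h2 : c0 * ((L *ᵥ fun i => deriv (f i) (x0 i + (L *ᵥ (z k)) i))
          ⬝ᵥ (L *ᵥ fun i => deriv (f i) (x0 i + (L *ᵥ (z k)) i))) ≤ gs k - gs (k+1) := by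
        rw [hgs]; linarith
      calc (L *ᵥ fun i => deriv (f i) (x0 i + (L *ᵥ (z k)) i))
            ⬝ᵥ (L *ᵥ fun i => deriv (f i) (x0 i + (L *ᵥ (z k)) i))
          = c0⁻¹ * (c0 * ((L *ᵥ fun i => deriv (f i) (x0 i + (L *ᵥ (z k)) i))
            ⬝ᵥ (L *ᵥ fun i => deriv (f i) (x0 i + (L *ᵥ (z k)) i)))) :=
            (inv_mul_cancel_left₀ hc00.ne' _).symm
      _ ≤ c0⁻¹ * (gs k - gs (k+1)) := by
            apply mul_le_mul_of_nonneg_left h2 (inv_nonneg.mpr hc00.le)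
    · have h9 := hdiff0.const_mul c0⁻¹
      rw [mul_zero] at h9
      exact h9.congr (fun k => by ring)
  -- Euclidean-space bridge
  set e : (Fin n → ℝ) → EuclideanSpace ℝ (Fin n) := ⇑(WithLp.equiv 2 (Fin n → ℝ)).symm with he
  have hInner : ∀ a b : Fin n → ℝ, a ⬝ᵥ b = inner ℝ (e a) (e b) := by
    intro a b
    have h1 := dot_eq_inner' (e a) (e b)
    simp only [he, Equiv.apply_symm_apply] at h1
    exact h1
  have hnormsq : ∀ w : Fin n → ℝ, ‖e w‖^2 = w ⬝ᵥ w := by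
    intro w
    rw [hInner w w, real_inner_self_eq_norm_sq]
  have hesub : ∀ a b : Fin n → ℝ, e a - e b = e (a - b) := fun a b => rfl
  have hGnorm0 : Tendsto (fun k => ‖e (L *ᵥ fun i => deriv (f i) (x0 i + (L *ᵥ (z k)) i))‖)
      atTop (nhds 0) := by
    have hsq : ∀ k, ‖e (L *ᵥ fun i => deriv (f i) (x0 i + (L *ᵥ (z k)) i))‖
        = Real.sqrt ((L *ᵥ fun i => deriv (f i) (x0 i + (L *ᵥ (z k)) i))
            ⬝ᵥ (L *ᵥ fun i => deriv (f i) (x0 i + (L *ᵥ (z k)) i))) := by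
      intro k
      rw [← hnormsq, Real.sqrt_sq (norm_nonneg _)]
    have h2 := (Real.continuous_sqrt.tendsto' 0 0 (by simp)).comp hGG0
    exact h2.congr (fun k => (hsq k).symm)
  set Z : ℕ → EuclideanSpace ℝ (Fin n) := fun k => e (z k) with hZ
  have hμinv : (0:ℝ) < (1-ε)⁻¹ := inv_pos.mpr h1ε
  have hdistb : ∀ k m, dist (Z k) (Z m)
      ≤ (1-ε)⁻¹ * (‖e (L *ᵥ fun i => deriv (f i) (x0 i + (L *ᵥ (z k)) i))‖
          + ‖e (L *ᵥ fun i => deriv (f i) (x0 i + (L *ᵥ (z m)) i))‖) := by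
    intro k m
    have hdsum : ∑ i, (z k - z m) i = 0 := by
      simp only [Pi.sub_apply]
      rw [Finset.sum_sub_distrib, hsum_z k, hsum_z m]
      ring
    have h4 := hC4 (z k) (z m) hdsum
    set Gk' : Fin n → ℝ := L *ᵥ fun i => deriv (f i) (x0 i + (L *ᵥ (z k)) i) with hGk'
    set Gm' : Fin n → ℝ := L *ᵥ fun i => deriv (f i) (x0 i + (L *ᵥ (z m)) i) with hGm'
    set t : ℝ := ‖e (z k - z m)‖ with htdef
    set s : ℝ := ‖e (Gk' - Gm')‖ with hsdef
    have hCS0 : (Gk' - Gm') ⬝ᵥ (z k - z m) ≤ s * t := by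
      rw [hInner]
      exact real_inner_le_norm _ _
    have hq0 : t^2 = (z k - z m) ⬝ᵥ (z k - z m) := hnormsq _
    have hs0 : s ≤ ‖e Gk'‖ + ‖e Gm'‖ := by
      rw [hsdef, ← hesub]
      exact norm_sub_le _ _
    have hdZ0 : dist (Z k) (Z m) = t := by
      rw [hZ, dist_eq_norm, hesub]
    have ht0 : 0 ≤ t := norm_nonneg _
    have hsnn : 0 ≤ s := norm_nonneg _
    clear_value t s
    have hCS := hCS0
    have hq := hq0
    have hnn : (1-ε) * t^2 ≤ s * t := by
      rw [hq]
      exact le_trans h4 hCS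
    have hb2 : (1-ε)*t ≤ s := by
      rcases eq_or_lt_of_le ht0 with h0 | h0
      · rw [← h0, mul_zero]
        exact hsnn
      · rw [pow_two] at hnn
        exact le_of_mul_le_mul_right (by nlinarith) h0
    rw [hdZ0]
    calc t = (1-ε)⁻¹ * ((1-ε) * t) := by field_simp
    _ ≤ (1-ε)⁻¹ * (‖e Gk'‖ + ‖e Gm'‖) :=
        mul_le_mul_of_nonneg_left (le_trans hb2 hs0) (le_of_lt hμinv)
  have hcauchy : CauchySeq Z := by
    rw [Metric.cauchySeq_iff]
    intro εd hεd
    obtain ⟨K, hK⟩ := Filter.eventually_atTop.mp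
      (hGnorm0.eventually_lt_const (show (0:ℝ) < (1-ε)*εd/3 by positivity))
    refine ⟨K, fun k hk m hm => ?_⟩
    have h7 := hK k hk
    have h8 := hK m hm
    have h9 := hdistb k m
    set nk : ℝ := ‖e (L *ᵥ fun i => deriv (f i) (x0 i + (L *ᵥ (z k)) i))‖ with hnk
    set nm : ℝ := ‖e (L *ᵥ fun i => deriv (f i) (x0 i + (L *ᵥ (z m)) i))‖ with hnm
    clear_value nk nm
    have h10 : (1-ε)⁻¹ * (nk + nm) < εd := by
      have hlt : nk + nm < 2*((1-ε)*εd/3) := by linarith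
      calc (1-ε)⁻¹ * (nk + nm) < (1-ε)⁻¹ * (2*((1-ε)*εd/3)) :=
            mul_lt_mul_of_pos_left hlt hμinv
      _ = 2*εd/3 := by field_simp
      _ < εd := by linarith
    exact lt_of_le_of_lt h9 h10
  obtain ⟨Zs, hZs⟩ := cauchySeq_tendsto_of_complete hcauchy
  set zstar : Fin n → ℝ := WithLp.equiv 2 (Fin n → ℝ) Zs with hzstar
  have hztend : Tendsto z atTop (nhds zstar) := by
    have hcont := PiLp.continuous_ofLp 2 (fun _ : Fin n => ℝ)
    have h1 := (hcont.tendsto Zs).comp hZs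
    exact h1.congr (fun k => rfl)
  -- continuity of the gradient map
  have hmvc : Continuous (fun w : Fin n → ℝ => L *ᵥ w) := by
    have h1 := LinearMap.continuous_of_finiteDimensional L.mulVecLin
    have heq : ⇑L.mulVecLin = fun w : Fin n → ℝ => L *ᵥ w :=
      funext fun w => Matrix.mulVecLin_apply L w
    rwa [heq] at h1
  have hgradcont : Continuous
      (fun zz : Fin n → ℝ => L *ᵥ fun i => deriv (f i) (x0 i + (L *ᵥ zz) i)) := by
    apply hmvc.comp
    apply continuous_pi
    intro i
    exact ((hf i).continuous_deriv (by norm_num)).comp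
      (continuous_const.add ((continuous_apply i).comp hmvc))
  have hGlim : Tendsto (fun k => L *ᵥ fun i => deriv (f i) (x0 i + (L *ᵥ (z k)) i))
      atTop (nhds (L *ᵥ fun i => deriv (f i) (x0 i + (L *ᵥ zstar) i))) :=
    (hgradcont.tendsto zstar).comp hztend
  have hGzero : Tendsto (fun k => L *ᵥ fun i => deriv (f i) (x0 i + (L *ᵥ (z k)) i))
      atTop (nhds 0) := by
    have h1 : Tendsto (fun k => e (L *ᵥ fun i => deriv (f i) (x0 i + (L *ᵥ (z k)) i)))
        atTop (nhds 0) := tendsto_zero_iff_norm_tendsto_zero.mpr hGnorm0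
    have hcont := PiLp.continuous_ofLp 2 (fun _ : Fin n => ℝ)
    have h2 := (hcont.tendsto 0).comp h1
    have hz' : WithLp.ofLp (0 : EuclideanSpace ℝ (Fin n)) = (0 : Fin n → ℝ) := rfl
    rw [hz'] at h2
    exact h2.congr (fun k => rfl)
  have hgradstar : (L *ᵥ fun i => deriv (f i) (x0 i + (L *ᵥ zstar) i)) = 0 :=
    tendsto_nhds_unique hGlim hGzero
  have hsumcont : Continuous (fun v : Fin n → ℝ => ∑ i, v i) :=
    continuous_finset_sum _ (fun i _ => continuous_apply i)
  have hsum_star : ∑ i, zstar i = ∑ i, z0 i := by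
    have h1 : Tendsto (fun k => ∑ i, z k i) atTop (nhds (∑ i, zstar i)) :=
      (hsumcont.tendsto zstar).comp hztend
    have h2 : Tendsto (fun k => ∑ i, z k i) atTop (nhds (∑ i, z 0 i)) := by
      have heq : (fun k => ∑ i, z k i) = fun _ => ∑ i, z 0 i := funext hsum_z
      rw [heq]
      exact tendsto_const_nhds
    have h3 := tendsto_nhds_unique h1 h2
    rw [h3, hz0]
  -- zero-gradient point is a global minimizer
  have hmin : ∀ u : Fin n → ℝ, (L *ᵥ fun i => deriv (f i) (x0 i + (L *ᵥ u) i)) = 0 →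
      ∀ w, (∑ i, f i (x0 i + (L *ᵥ u) i)) ≤ ∑ i, f i (x0 i + (L *ᵥ w) i) := by
    intro u hu w
    have h1 := hC1 u (w - u)
    rw [hu, dotProduct_zero, add_zero, show u + (w - u) = w from by abel] at h1
    exact h1
  -- gradient vanishes at any global minimizer
  have hgradmin : ∀ w : Fin n → ℝ,
      (∀ w', (∑ i, f i (x0 i + (L *ᵥ w) i)) ≤ ∑ i, f i (x0 i + (L *ᵥ w') i)) →
      (L *ᵥ fun i => deriv (f i) (x0 i + (L *ᵥ w) i)) = 0 := by
    intro w hwmin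
    set u : Fin n → ℝ := L *ᵥ fun i => deriv (f i) (x0 i + (L *ᵥ w) i) with hu
    have husum : ∑ i, u i = 0 := h_sumLv _
    have hds : ∑ i, ((-(1+ε)⁻¹) • u) i = 0 := by
      simp only [Pi.smul_apply, smul_eq_mul]
      rw [← Finset.mul_sum, husum, mul_zero]
    have h2 := hC2 w ((-(1+ε)⁻¹) • u) hds
    rw [← hu] at h2
    have e1 : ((-(1+ε)⁻¹) • u) ⬝ᵥ u = -((1+ε)⁻¹ * (u ⬝ᵥ u)) := by
      rw [smul_dotProduct, smul_eq_mul]; ring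
    have e2 : ((-(1+ε)⁻¹) • u) ⬝ᵥ ((-(1+ε)⁻¹) • u) = (1+ε)⁻¹ * (1+ε)⁻¹ * (u ⬝ᵥ u) := by
      rw [smul_dotProduct, dotProduct_smul, smul_eq_mul, smul_eq_mul]; ring
    rw [e1, e2] at h2
    have h3 := hwmin (w + (-(1+ε)⁻¹) • u)
    have hco : -((1+ε)⁻¹ * (u ⬝ᵥ u)) + (1+ε)/2 * ((1+ε)⁻¹ * (1+ε)⁻¹ * (u ⬝ᵥ u))
        = -((1+ε)⁻¹/2 * (u ⬝ᵥ u)) := by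
      field_simp
      ring
    have huu := dot_self_nonneg' u
    have hinv2 : (0:ℝ) < (1+ε)⁻¹ := inv_pos.mpr h1ε'
    have hzero : u ⬝ᵥ u = 0 := by nlinarith [h2, h3, hco]
    exact dot_self_eq_zero'' hzero
  -- assemble
  simp only [hg]
  refine ⟨zstar, ?_, hsum_star, ?_, hztend⟩
  · intro w
    exact hmin zstar hgradstar w
  · intro w hwmin hwsum
    have hgw := hgradmin w hwmin
    have hdsum : ∑ i, (w - zstar) i = 0 := by
      simp only [Pi.sub_apply]
      rw [Finset.sum_sub_distrib, hwsum, hsum_star]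
      ring
    have h4 := hC4 w zstar hdsum
    rw [hgw, hgradstar] at h4
    have h5 : ((0:Fin n → ℝ) - 0) ⬝ᵥ (w - zstar) = 0 := by simp
    rw [h5] at h4
    have hQ := dot_self_nonneg' (w - zstar)
    have hQ0 : (w - zstar) ⬝ᵥ (w - zstar) = 0 := by nlinarith
    have h6 := dot_self_eq_zero'' hQ0
    exact sub_eq_zero.mp h6

end DanaMain
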